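/- arXiv:0804.1382 — 8 statements merged into one kernel-verified Lean document; each statement's English description precedes it below -/
import Mathlib

section
/- Let 0 < a < 1 and P2 ≥ 0 be real numbers. Then the function P1 ↦ R_s(a, P1, P2) is monotone nondecreasing on [0, ∞); in particular, when a < 1 the transmitter maximizes the achievable secrecy rate by using full power. -/
/-- `g x = (1/2) * log₂ (1 + x)` -/
noncomputable def g (x : ℝ) : ℝ := (1/2) * Real.logb 2 (1 + x)

/-- Achievable secrecy rate of the symmetric Gaussian wiretap channel
with a helping interferer. -/
noncomputable def Rs (a P1 P2 : ℝ) : ℝ :=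
  if 1 + P2 ≤ a then 0
  else if 1 ≤ a then
    if P1 < P2 ∧ 1 + P1 < a then g P1 - g (a * P1 / (1 + P2))
    else if P1 < P2 ∧ a ≤ 1 + P1 then g (P1 + a * P2) - g (a * P1 + P2)
    else 0
  else
    if P2 < P1 then g (P1 / (1 + a * P2)) - g (a * P1 / (1 + P2))
    else g P1 - g (a * P1)

lemma g_sub_le {u v u' v' : ℝ} (hu : 0 < 1+u) (hv : 0 < 1+v) (hu' : 0 < 1+u')
    (hv' : 0 < 1+v') (h : (1+u)*(1+v') ≤ (1+u')*(1+v)) :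
    g u - g v ≤ g u' - g v' := by
  unfold g
  rw [← mul_sub, ← mul_sub]
  apply mul_le_mul_of_nonneg_left _ (by norm_num)
  unfold Real.logb
  rw [div_sub_div_same, div_sub_div_same]
  apply div_le_div_of_nonneg_right _ (Real.log_pos (by norm_num : (1:ℝ) < 2)).le
  have := Real.log_le_log (by positivity) h
  rw [Real.log_mul (by positivity) (by positivity),
    Real.log_mul (by positivity) (by positivity)] at this
  linarith

/-- For `0 < a < 1` the secrecy rate is monotone nondecreasing in the
transmitter power: the transmitter should use full power. -/
theorem Rs_monotoneOn_P1_weak (a P2 : ℝ) (ha0 : 0 < a) (ha1 : a < 1)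
    (hP2 : 0 ≤ P2) :
    MonotoneOn (fun P1 : ℝ => Rs a P1 P2) (Set.Ici 0) := by
  have hna : ¬ (1 + P2 ≤ a) := by linarith
  have hna1 : ¬ (1 ≤ a) := by linarith
  have h1P2 : (0:ℝ) < 1 + P2 := by linarith
  have haP2 : (0:ℝ) < 1 + a * P2 := by positivity
  -- h1 monotone
  have h1mono : ∀ x y : ℝ, 0 ≤ x → x ≤ y → g x - g (a*x) ≤ g y - g (a*y) := by
    intro x y hx hxy
    apply g_sub_le (by positivity) (by positivity) (by nlinarith) (by nlinarith)
    nlinarith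
  have h2mono : ∀ x y : ℝ, 0 ≤ x → x ≤ y →
      g (x/(1+a*P2)) - g (a*x/(1+P2)) ≤ g (y/(1+a*P2)) - g (a*y/(1+P2)) := by
    intro x y hx hxy
    have hy : 0 ≤ y := le_trans hx hxy
    apply g_sub_le (by positivity) (by positivity) (by positivity) (by positivity)
    have key : (0:ℝ) ≤ (y - x) * ((1 - a) + P2 * (1 - a * a)) :=
      mul_nonneg (by linarith) (by nlinarith)
    rw [add_div' _ _ _ (ne_of_gt haP2), add_div' _ _ _ (ne_of_gt h1P2),
        add_div' _ _ _ (ne_of_gt haP2), add_div' _ _ _ (ne_of_gt h1P2),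
        div_mul_div_comm, div_mul_div_comm,
        div_le_div_iff₀ (by positivity) (by positivity)]
    nlinarith [mul_pos haP2 h1P2]
  -- junction equality
  have hjunc : g P2 - g (a*P2) = g (P2/(1+a*P2)) - g (a*P2/(1+P2)) := by
    apply le_antisymm
    · apply g_sub_le (by positivity) (by positivity) (by positivity) (by positivity)
      field_simp
      ring_nf
      exact le_refl _
    · apply g_sub_le (by positivity) (by positivity) (by positivity) (by positivity)
      field_simp
      ring_nf
      exact le_refl _
  intro x hx y hy hxy
  simp only [Rs, if_neg hna, if_neg hna1]
  simp only [Set.mem_Ici] at hx hy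
  by_cases hxP : P2 < x
  · rw [if_pos hxP, if_pos (lt_of_lt_of_le hxP hxy)]
    exact h2mono x y hx hxy
  · rw [if_neg hxP]
    push_neg at hxP
    by_cases hyP : P2 < y
    · rw [if_pos hyP]
      calc g x - g (a*x) ≤ g P2 - g (a*P2) := h1mono x P2 hx hxP
        _ = g (P2/(1+a*P2)) - g (a*P2/(1+P2)) := hjunc
        _ ≤ g (y/(1+a*P2)) - g (a*y/(1+P2)) := h2mono P2 y hP2 hyP.le
    · rw [if_neg hyP]
      exact h1mono x y hx hxy
end

section
/- Let 0 < a < 1 and P1 > 0 be real numbers and set P2* := (√(1 + (1+a)·P1) − 1)/(1+a). Then for every P2 ≥ 0, R_s(a, P1, P2) ≤ R_s(a, P1, P2*) = g(P1/(1+a·P2*)) − g(a·P1/(1+P2*)); that is, P2* globally maximizes the achievable secrecy rate over the interferer power when a < 1. -/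
set_option maxHeartbeats 1000000 in
/-- For `0 < a < 1`, `P2* = (√(1+(1+a)P1)-1)/(1+a)` globally maximizes the
secrecy rate over the interferer power, and the maximum equals
`g (P1/(1+a P2*)) - g (a P1/(1+P2*))`. -/
theorem P2star_maximizes (a P1 : ℝ) (ha0 : 0 < a) (ha1 : a < 1) (hP1 : 0 < P1) :
    (∀ P2 : ℝ, 0 ≤ P2 →
      Rs a P1 P2 ≤ Rs a P1 ((Real.sqrt (1 + (1 + a) * P1) - 1) / (1 + a))) ∧
    Rs a P1 ((Real.sqrt (1 + (1 + a) * P1) - 1) / (1 + a)) =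
      g (P1 / (1 + a * ((Real.sqrt (1 + (1 + a) * P1) - 1) / (1 + a)))) -
      g (a * P1 / (1 + (Real.sqrt (1 + (1 + a) * P1) - 1) / (1 + a))) := by
  have hu : (0:ℝ) < 1 + a := by linarith
  set s : ℝ := Real.sqrt (1 + (1 + a) * P1) with hs_def
  set T : ℝ := (s - 1) / (1 + a) with hT_def
  have hs2 : s ^ 2 = 1 + (1 + a) * P1 := Real.sq_sqrt (by nlinarith)
  have hs0 : 0 ≤ s := Real.sqrt_nonneg _
  have hs1 : 1 < s := by nlinarith
  have hT0 : 0 < T := div_pos (by linarith) hu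
  have hTP1 : T < P1 := by
    rw [hT_def, div_lt_iff₀ hu]; nlinarith
  have hTs : (1 + a) * T = s - 1 := by
    rw [hT_def]; field_simp
  have hPs : (1 + a) * P1 = s ^ 2 - 1 := by linarith
  -- rewrite g-differences as a single logb of a ratio
  have key : ∀ x : ℝ, 0 ≤ x →
      g (P1 / (1 + a * x)) - g (a * P1 / (1 + x)) =
      (1/2) * Real.logb 2 ((1 + a * x + P1) * (1 + x) / ((1 + a * x) * (1 + x + a * P1))) := by
    intro x hx
    have hax : 0 ≤ a * x := mul_nonneg ha0.le hx
    have h1 : (0:ℝ) < 1 + a * x := by linarith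
    have h2 : (0:ℝ) < 1 + x := by linarith
    have h3 : (0:ℝ) < 1 + a * x + P1 := by linarith
    have h4 : (0:ℝ) < 1 + x + a * P1 := by nlinarith
    unfold g
    rw [show 1 + P1 / (1 + a * x) = (1 + a * x + P1) / (1 + a * x) by
          field_simp [h1.ne'],
        show 1 + a * P1 / (1 + x) = (1 + x + a * P1) / (1 + x) by
          field_simp [h2.ne'],
        ← mul_sub, ← Real.logb_div (by positivity) (by positivity)]
    congr 1
    field_simp
  -- the core inequality
  have hmain : ∀ t : ℝ, 0 ≤ t →
      g (P1 / (1 + a * t)) - g (a * P1 / (1 + t)) ≤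
      g (P1 / (1 + a * T)) - g (a * P1 / (1 + T)) := by
    intro t ht
    rw [key t ht, key T hT0.le]
    have hat : 0 ≤ a * t := mul_nonneg ha0.le ht
    have h1 : (0:ℝ) < 1 + a * t := by linarith
    have h2 : (0:ℝ) < 1 + t := by linarith
    have h3 : (0:ℝ) < 1 + a * t + P1 := by linarith
    have h4 : (0:ℝ) < 1 + t + a * P1 := by nlinarith
    have haT : 0 ≤ a * T := mul_nonneg ha0.le hT0.le
    have h5 : (0:ℝ) < 1 + a * T := by linarith
    have h6 : (0:ℝ) < 1 + T := by linarith
    have h7 : (0:ℝ) < 1 + a * T + P1 := by linarith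
    have h8 : (0:ℝ) < 1 + T + a * P1 := by nlinarith
    have hid : ((1 + a * T + P1) * (1 + T) * ((1 + a * t) * (1 + t + a * P1)) -
        (1 + a * t + P1) * (1 + t) * ((1 + a * T) * (1 + T + a * P1))) * (1 + a) ^ 3 =
        a * (1 - a) * s * (s ^ 2 - 1) * ((1 + a) * t + 1 - s) ^ 2 := by
      have hP1' : P1 = (s ^ 2 - 1) / (1 + a) := by
        rw [eq_div_iff hu.ne']; linarith
      rw [hP1', hT_def]
      field_simp
      ring
    have hfac : 0 ≤ a * (1 - a) * s * (s ^ 2 - 1) :=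
      le_of_lt (mul_pos (mul_pos (mul_pos ha0 (by linarith)) (by linarith)) (by nlinarith))
    have hnn : 0 ≤ a * (1 - a) * s * (s ^ 2 - 1) * ((1 + a) * t + 1 - s) ^ 2 :=
      mul_nonneg hfac (sq_nonneg _)
    have hle : (1 + a * t + P1) * (1 + t) / ((1 + a * t) * (1 + t + a * P1)) ≤
        (1 + a * T + P1) * (1 + T) / ((1 + a * T) * (1 + T + a * P1)) := by
      rw [div_le_div_iff₀ (by positivity) (by positivity)]
      have h10 : 0 ≤ ((1 + a * T + P1) * (1 + T) * ((1 + a * t) * (1 + t + a * P1)) -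
          (1 + a * t + P1) * (1 + t) * ((1 + a * T) * (1 + T + a * P1))) * (1 + a) ^ 3 := by
        rw [hid]; exact hnn
      have h11 := (mul_nonneg_iff_of_pos_right (pow_pos hu 3)).mp h10
      linarith
    have hQ1 : (0:ℝ) < (1 + a * t + P1) * (1 + t) / ((1 + a * t) * (1 + t + a * P1)) := by
      positivity
    have := Real.logb_le_logb_of_le (by norm_num : (1:ℝ) < 2) hQ1 hle
    linarith
  have hnotle : ¬ (1 + T ≤ a) := by linarith
  have hnotone : ¬ ((1:ℝ) ≤ a) := by linarith
  have hRsT : Rs a P1 T = g (P1 / (1 + a * T)) - g (a * P1 / (1 + T)) := by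
    unfold Rs
    rw [if_neg hnotle, if_neg hnotone, if_pos hTP1]
  constructor
  · intro P2 hP2
    have hnl2 : ¬ (1 + P2 ≤ a) := by linarith
    rw [hRsT]
    unfold Rs
    rw [if_neg hnl2, if_neg hnotone]
    by_cases hlt : P2 < P1
    · rw [if_pos hlt]
      exact hmain P2 hP2
    · rw [if_neg hlt]
      have h0 := hmain 0 le_rfl
      simpa using h0
  · exact hRsT
end

section
/- (Power control, weak interference.) Let 0 < a < 1 and let P̄1 > 0, P̄2 ≥ 0 be power constraints, and set P2* := (√(1 + (1+a)·P̄1) − 1)/(1+a). Then for all P1 with 0 ≤ P1 ≤ P̄1 and all P2 with 0 ≤ P2 ≤ P̄2, R_s(a, P1, P2) ≤ R_s(a, P̄1, min(P̄2, P2*)); that is, the secrecy rate is maximized by the power allocation (P̄1, min{P̄2, P2*}). -/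
/-- Comparison of differences of `g` via a ratio inequality. -/
lemma g_sub_le_s10 {X Y X' Y' : ℝ} (hX : 0 < 1 + X) (hY : 0 < 1 + Y)
    (hX' : 0 < 1 + X') (hY' : 0 < 1 + Y')
    (h : (1 + X) / (1 + Y) ≤ (1 + X') / (1 + Y')) :
    g X - g Y ≤ g X' - g Y' := by
  have h' : (1 + X) * (1 + Y') ≤ (1 + X') * (1 + Y) :=
    (div_le_div_iff₀ hY hY').mp h
  have h1 : Real.logb 2 ((1 + X) * (1 + Y')) ≤ Real.logb 2 ((1 + X') * (1 + Y)) :=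
    Real.logb_le_logb_of_le one_lt_two (by positivity) h'
  rw [Real.logb_mul hX.ne' hY'.ne', Real.logb_mul hX'.ne' hY.ne'] at h1
  unfold g
  linarith

/-- Rewriting the ratio `(1 + X) / (1 + Y)` in product form. -/
lemma ratio_eq {a P t : ℝ} (ha : 0 ≤ a) (hP : 0 ≤ P)
    (h1 : (0:ℝ) < 1 + a * t) (h2 : (0:ℝ) < 1 + t) :
    (1 + P / (1 + a * t)) / (1 + a * P / (1 + t)) =
      ((1 + P + a * t) * (1 + t)) / ((1 + a * t) * (1 + t + a * P)) := by
  have hb : (0:ℝ) < 1 + a * P / (1 + t) := by positivity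
  have hc : (0:ℝ) < (1 + a * t) * (1 + t + a * P) := by positivity
  rw [div_eq_div_iff hb.ne' hc.ne']
  field_simp
  ring

/-- Monotonicity of the rate ratio in the signal power `P`. -/
lemma ratio_monoP {a P P' t : ℝ} (ha0 : 0 < a) (ha1 : a < 1)
    (ht : 0 ≤ t) (hP : 0 ≤ P) (hPP : P ≤ P') :
    ((1 + P + a * t) * (1 + t)) / ((1 + a * t) * (1 + t + a * P)) ≤
      ((1 + P' + a * t) * (1 + t)) / ((1 + a * t) * (1 + t + a * P')) := by
  have h1 : (0:ℝ) < 1 + a * t := by nlinarith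
  have h2 : (0:ℝ) < 1 + t + a * P := by nlinarith
  have h3 : (0:ℝ) < 1 + t + a * P' := by nlinarith
  rw [div_le_div_iff₀ (by positivity) (by positivity)]
  nlinarith [mul_nonneg (mul_nonneg
      (mul_pos (by linarith : (0:ℝ) < 1 + t) h1).le
      (by linarith : (0:ℝ) ≤ P' - P))
      (by nlinarith : (0:ℝ) ≤ 1 + t - a - a * (a * t))]

/-- Monotonicity of the rate ratio in the interferer power, governed by the
sign of `(t - s) * (P - s - t - (1+a)*s*t)`. -/
lemma ratio_monoT {a P s t : ℝ} (ha0 : 0 < a) (ha1 : a < 1)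
    (hs : 0 ≤ s) (ht : 0 ≤ t) (hP : 0 ≤ P)
    (key : 0 ≤ (t - s) * (P - s - t - (1 + a) * s * t)) :
    ((1 + P + a * s) * (1 + s)) / ((1 + a * s) * (1 + s + a * P)) ≤
      ((1 + P + a * t) * (1 + t)) / ((1 + a * t) * (1 + t + a * P)) := by
  have h1 : (0:ℝ) < 1 + a * s := by nlinarith
  have h2 : (0:ℝ) < 1 + a * t := by nlinarith
  have h3 : (0:ℝ) < 1 + s + a * P := by nlinarith
  have h4 : (0:ℝ) < 1 + t + a * P := by nlinarith
  rw [div_le_div_iff₀ (by positivity) (by positivity)]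
  nlinarith [mul_nonneg (mul_nonneg (mul_nonneg ha0.le hP)
      (by linarith : (0:ℝ) ≤ 1 - a)) key]

/-- Power control, weak interference: for `0 < a < 1`, the secrecy rate is
maximized by the allocation `(P̄1, min P̄2 P2*)`. -/
theorem powerControl_weak (a Pbar1 Pbar2 : ℝ) (ha0 : 0 < a) (ha1 : a < 1)
    (hP1 : 0 < Pbar1) (hP2 : 0 ≤ Pbar2) :
    ∀ P1 P2 : ℝ, 0 ≤ P1 → P1 ≤ Pbar1 → 0 ≤ P2 → P2 ≤ Pbar2 →
      Rs a P1 P2 ≤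
        Rs a Pbar1 (min Pbar2 ((Real.sqrt (1 + (1 + a) * Pbar1) - 1) / (1 + a))) := by
  intro P1 P2 h1l h1u h2l h2u
  set u := Real.sqrt (1 + (1 + a) * Pbar1) with hu
  set tstar := (u - 1) / (1 + a) with hts
  set Q := min Pbar2 tstar with hQ
  have ha1p : (0:ℝ) < 1 + a := by linarith
  have harg : (1:ℝ) ≤ 1 + (1 + a) * Pbar1 := by nlinarith
  have hu1 : 1 ≤ u := by
    rw [hu]
    nlinarith [Real.sq_sqrt (by linarith : (0:ℝ) ≤ 1 + (1 + a) * Pbar1),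
      Real.sqrt_nonneg (1 + (1 + a) * Pbar1)]
  have husq : u ^ 2 = 1 + (1 + a) * Pbar1 :=
    Real.sq_sqrt (by linarith : (0:ℝ) ≤ 1 + (1 + a) * Pbar1)
  have htstar0 : 0 ≤ tstar := by
    rw [hts]; apply div_nonneg (by linarith) (by linarith)
  have htseq : (1 + a) * tstar ^ 2 + 2 * tstar = Pbar1 := by
    have h : (1 + a) * tstar = u - 1 := by
      rw [hts]; field_simp
    nlinarith [h, husq]
  clear_value Q tstar u
  clear hu hts hu1 husq harg
  have htslt : tstar < Pbar1 := by nlinarith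
  have hQ0 : 0 ≤ Q := hQ ▸ le_min hP2 htstar0
  have hQts : Q ≤ tstar := hQ ▸ min_le_right _ _
  have hQlt : Q < Pbar1 := lt_of_le_of_lt hQts htslt
  have hQquad : (1 + a) * Q ^ 2 + 2 * Q ≤ Pbar1 := by
    nlinarith [mul_nonneg (sub_nonneg.2 hQts) (by linarith : (0:ℝ) ≤ tstar + Q)]
  -- unfold Rs
  have hcond1 : ¬ (1 + P2 ≤ a) := by linarith
  have hcond2 : ¬ ((1:ℝ) ≤ a) := by linarith
  have hcond1' : ¬ (1 + Q ≤ a) := by linarith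
  rw [Rs, if_neg hcond1, if_neg hcond2, Rs, if_neg hcond1', if_neg hcond2,
    if_pos hQlt]
  have hdQ1 : (0:ℝ) < 1 + a * Q := by nlinarith
  have hdQ2 : (0:ℝ) < 1 + Q := by linarith
  have hX' : 0 < 1 + Pbar1 / (1 + a * Q) := by
    have := div_nonneg hP1.le hdQ1.le; linarith
  have hY' : 0 < 1 + a * Pbar1 / (1 + Q) := by
    have := div_nonneg (mul_nonneg ha0.le hP1.le) hdQ2.le; linarith
  have hR' := ratio_eq (a := a) (P := Pbar1) (t := Q) ha0.le hP1.le hdQ1 hdQ2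
  by_cases hc : P2 < P1
  · rw [if_pos hc]
    have hd1 : (0:ℝ) < 1 + a * P2 := by nlinarith
    have hd2 : (0:ℝ) < 1 + P2 := by linarith
    have hX : 0 < 1 + P1 / (1 + a * P2) := by
      have := div_nonneg h1l hd1.le; linarith
    have hY : 0 < 1 + a * P1 / (1 + P2) := by
      have := div_nonneg (mul_nonneg ha0.le h1l) hd2.le; linarith
    apply g_sub_le_s10 hX hY hX' hY'
    rw [ratio_eq (a := a) (P := P1) (t := P2) ha0.le h1l hd1 hd2, hR']
    have step1 := ratio_monoP (a := a) (t := P2) ha0 ha1 h2l h1l h1u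
    refine le_trans step1 (ratio_monoT ha0 ha1 h2l hQ0 hP1.le ?_)
    clear step1 hR' hX' hY' hX hY hcond1 hcond2 hcond1'
    have hQp : (0:ℝ) ≤ 1 + (1 + a) * Q := by nlinarith [mul_nonneg ha1p.le hQ0]
    by_cases hPQ : P2 ≤ Q
    · have h5 : P2 + Q + (1 + a) * P2 * Q ≤ Pbar1 := by
        nlinarith [mul_nonneg (by linarith : (0:ℝ) ≤ Q - P2)
          hQp]
      exact mul_nonneg (by linarith) (by linarith)
    · -- here `Q < P2` forces `Q = tstar`, and we are past the peak
      have hQeq : Q = tstar := by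
        rcases le_total Pbar2 tstar with h | h
        · exact absurd (le_trans h2u (le_of_eq (hQ.trans (min_eq_left h)).symm)) hPQ
        · exact hQ.trans (min_eq_right h)
      have hPeq : Pbar1 = (1 + a) * Q ^ 2 + 2 * Q := by
        rw [hQeq]; exact htseq.symm
      have hQP2 : Q ≤ P2 := le_of_not_ge hPQ
      have h5 : Pbar1 - P2 - Q - (1 + a) * P2 * Q = (Q - P2) * (1 + (1 + a) * Q) := by
        rw [hPeq]; ring
      have h6 : (Q - P2) * (Pbar1 - P2 - Q - (1 + a) * P2 * Q) =
          (Q - P2) ^ 2 * (1 + (1 + a) * Q) := by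
        rw [mul_comm (Q - P2) _, h5]; ring
      rw [h6]
      exact mul_nonneg (sq_nonneg _) hQp
  · rw [if_neg hc]
    have hX : (0:ℝ) < 1 + P1 := by linarith
    have hY : (0:ℝ) < 1 + a * P1 := by nlinarith
    apply g_sub_le_s10 hX hY hX' hY'
    have hR0 : (1 + P1) / (1 + a * P1) =
        ((1 + P1 + a * 0) * (1 + 0)) / ((1 + a * 0) * (1 + 0 + a * P1)) := by
      norm_num
    rw [hR0, hR']
    have step1 := ratio_monoP (a := a) (t := 0) ha0 ha1 le_rfl h1l h1u
    refine le_trans step1 (ratio_monoT ha0 ha1 le_rfl hQ0 hP1.le ?_)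
    clear step1 hR' hX' hY' hX hY hcond1 hcond2 hcond1'
    have h6 : (Q - 0) * (Pbar1 - 0 - Q - (1 + a) * 0 * Q) = Q * (Pbar1 - Q) := by ring
    rw [h6]
    exact mul_nonneg hQ0 (by linarith)
end

section
/- Let a and P̄1, P̄2 be real numbers with 1 < a < 1 + P̄2 and P̄1 > 0. Then R_s(a, min(P̄1, a−1), P̄2) > 0; that is, with the power-control allocation (min{P̄1, a−1}, P̄2) a strictly positive secrecy rate is achievable whenever 1 < a < 1 + P̄2, even though the secrecy capacity of the Gaussian wiretap channel without the interferer is zero for a ≥ 1. -/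
lemma g_lt_g {x y : ℝ} (hx : 0 ≤ x) (hxy : x < y) : g x < g y := by
  unfold g
  have : Real.logb 2 (1 + x) < Real.logb 2 (1 + y) :=
    Real.logb_lt_logb one_lt_two (by linarith) (by linarith)
  linarith

/-- For `1 < a < 1 + P̄2` and `P̄1 > 0`, the power-control allocation
`(min P̄1 (a-1), P̄2)` achieves a strictly positive secrecy rate. -/
theorem positive_rate_strong (a Pbar1 Pbar2 : ℝ) (ha : 1 < a)
    (hP2 : a < 1 + Pbar2) (hP1 : 0 < Pbar1) :
    0 < Rs a (min Pbar1 (a - 1)) Pbar2 := by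
  set P1 := min Pbar1 (a - 1) with hP1def
  have hP1pos : 0 < P1 := lt_min hP1 (by linarith)
  have hP1le : P1 ≤ a - 1 := min_le_right _ _
  have hlt : P1 < Pbar2 := lt_of_le_of_lt hP1le (by linarith)
  unfold Rs
  rw [if_neg (by linarith), if_pos (by linarith)]
  by_cases hc : 1 + P1 < a
  · rw [if_pos ⟨hlt, hc⟩]
    have hkey : a * P1 / (1 + Pbar2) < P1 := by
      rw [div_lt_iff₀ (by linarith)]
      nlinarith
    have h0 : 0 ≤ a * P1 / (1 + Pbar2) := by
      apply div_nonneg <;> nlinarith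
    linarith [g_lt_g h0 hkey]
  · rw [if_neg (by tauto), if_pos ⟨hlt, le_of_not_gt hc⟩]
    have h1 : a * P1 + Pbar2 < P1 + a * Pbar2 := by nlinarith
    have h0 : 0 ≤ a * P1 + Pbar2 := by nlinarith
    linarith [g_lt_g h0 h1]
end

section
/- (Helper never hurts in weak interference.) Let 0 < a < 1 and let P̄1 > 0, P̄2 ≥ 0, and set P2* := (√(1 + (1+a)·P̄1) − 1)/(1+a). Then R_s(a, P̄1, min(P̄2, P2*)) ≥ g(P̄1) − g(a·P̄1); that is, the power-controlled secrecy rate with the helping interferer is at least the secrecy capacity g(P̄1) − g(aP̄1) of the Gaussian wiretap channel without the interferer. -/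
/-- Helper never hurts in weak interference: the power-controlled secrecy
rate with the helping interferer is at least the secrecy capacity
`g P̄1 - g (a P̄1)` of the Gaussian wiretap channel without interferer. -/
theorem helper_never_hurts (a Pbar1 Pbar2 : ℝ) (ha0 : 0 < a) (ha1 : a < 1)
    (hP1 : 0 < Pbar1) (hP2 : 0 ≤ Pbar2) :
    g Pbar1 - g (a * Pbar1) ≤
      Rs a Pbar1 (min Pbar2 ((Real.sqrt (1 + (1 + a) * Pbar1) - 1) / (1 + a))) := by
  set p2 : ℝ := min Pbar2 ((Real.sqrt (1 + (1 + a) * Pbar1) - 1) / (1 + a)) with hp2def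
  have hsqrt : (1:ℝ) ≤ Real.sqrt (1 + (1 + a) * Pbar1) := by
    have h := Real.sqrt_le_sqrt (show (1:ℝ) ≤ 1 + (1 + a) * Pbar1 by nlinarith)
    simpa using h
  have hp2nn : 0 ≤ p2 := le_min hP2 (div_nonneg (by linarith) (by linarith))
  have hcond1 : ¬ (1 + p2 ≤ a) := by push_neg; linarith
  have hcond2 : ¬ ((1:ℝ) ≤ a) := by linarith
  rw [Rs, if_neg hcond1, if_neg hcond2]
  by_cases hlt : p2 < Pbar1
  · rw [if_pos hlt]
    have h2pos : (0:ℝ) < 1 + p2 := by linarith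
    have h1pos : (0:ℝ) < 1 + a * p2 := by nlinarith
    -- key product inequality
    have key : (1 + Pbar1) * (1 + a * Pbar1 / (1 + p2)) ≤
        (1 + Pbar1 / (1 + a * p2)) * (1 + a * Pbar1) := by
      have e1 : (1 + Pbar1) * (1 + a * Pbar1 / (1 + p2)) =
          ((1 + Pbar1) * ((1 + p2) + a * Pbar1)) / (1 + p2) := by
        field_simp
      have e2 : (1 + Pbar1 / (1 + a * p2)) * (1 + a * Pbar1) =
          (((1 + a * p2) + Pbar1) * (1 + a * Pbar1)) / (1 + a * p2) := by
        field_simp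
      rw [e1, e2, div_le_div_iff₀ h2pos h1pos]
      nlinarith [mul_nonneg (mul_nonneg (mul_nonneg (mul_nonneg ha0.le hP1.le) hp2nn)
        (sub_nonneg.2 ha1.le)) (sub_nonneg.2 hlt.le)]
    have px1 : (0:ℝ) < 1 + Pbar1 := by linarith
    have py1 : (0:ℝ) < 1 + a * Pbar1 / (1 + p2) := by positivity
    have px2 : (0:ℝ) < 1 + Pbar1 / (1 + a * p2) := by positivity
    have py2 : (0:ℝ) < 1 + a * Pbar1 := by nlinarith
    have hlog : Real.logb 2 ((1 + Pbar1) * (1 + a * Pbar1 / (1 + p2))) ≤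
        Real.logb 2 ((1 + Pbar1 / (1 + a * p2)) * (1 + a * Pbar1)) :=
      Real.logb_le_logb_of_le one_lt_two (by positivity) key
    rw [Real.logb_mul px1.ne' py1.ne', Real.logb_mul px2.ne' py2.ne'] at hlog
    simp only [g]
    linarith
  · rw [if_neg hlt]
end

section
/- (Power-unconstrained secrecy rate, strong interference.) Let a > 1 be a real number. For P̄ ≥ 0 define S(P̄) := sup { R_s(a, P1, P2) : 0 ≤ P1 ≤ P̄, 0 ≤ P2 ≤ P̄ }. Then S(P̄) tends to (1/2)·log₂ a as P̄ → ∞. -/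
open Filter

lemma g_nonneg {x : ℝ} (hx : 0 ≤ x) : 0 ≤ g x := by
  have : 0 ≤ Real.logb 2 (1 + x) := Real.logb_nonneg one_lt_two (by linarith)
  unfold g; linarith

lemma g_mono {x y : ℝ} (hx : -1 < x) (hxy : x ≤ y) : g x ≤ g y := by
  have : Real.logb 2 (1 + x) ≤ Real.logb 2 (1 + y) :=
    Real.logb_le_logb_of_le one_lt_two (by linarith) (by linarith)
  unfold g; linarith

lemma Rs_le (a P1 P2 : ℝ) (ha : 1 < a) (hP1 : 0 ≤ P1) (hP2 : 0 ≤ P2) :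
    Rs a P1 P2 ≤ (1/2) * Real.logb 2 a := by
  have hL : 0 ≤ (1/2) * Real.logb 2 a := by
    have : 0 ≤ Real.logb 2 a := Real.logb_nonneg one_lt_two ha.le
    linarith
  unfold Rs
  split_ifs with h1 h2 h3 h4 h5
  · exact hL
  · -- g P1 - g (a*P1/(1+P2)) ≤ L
    have h0 : 0 ≤ g (a * P1 / (1 + P2)) :=
      g_nonneg (div_nonneg (mul_nonneg (by linarith) hP1) (by linarith))
    have hP1a : P1 ≤ a - 1 := by linarith [h3.2]
    have : g P1 ≤ g (a - 1) := g_mono (by linarith) hP1a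
    have hga : g (a - 1) = (1/2) * Real.logb 2 a := by
      unfold g; ring_nf
    linarith
  · -- g (P1 + a*P2) - g (a*P1 + P2) ≤ L
    have hx : (0:ℝ) < 1 + (P1 + a * P2) := by nlinarith
    have hy : (0:ℝ) < 1 + (a * P1 + P2) := by nlinarith
    have key : 1 + (P1 + a * P2) ≤ a * (1 + (a * P1 + P2)) := by nlinarith [mul_nonneg hP1 (show (0:ℝ) ≤ a^2 - 1 by nlinarith)]
    have h1' : Real.logb 2 (1 + (P1 + a * P2)) ≤ Real.logb 2 (a * (1 + (a * P1 + P2))) :=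
      Real.logb_le_logb_of_le one_lt_two hx key
    have h2' : Real.logb 2 (a * (1 + (a * P1 + P2))) =
        Real.logb 2 a + Real.logb 2 (1 + (a * P1 + P2)) :=
      Real.logb_mul (by linarith) (by linarith)
    unfold g; linarith [h1', h2']
  · exact hL
  · linarith
  · linarith

lemma helper_tendsto (a : ℝ) (ha : 1 < a) :
    Tendsto (fun P : ℝ => Rs a (a - 1) P) atTop
      (nhds ((1/2) * Real.logb 2 a)) := by
  set c : ℝ := a ^ 2 - a + 1 with hc
  have hcpos : 0 < c := by nlinarith
  have hapos : 0 < a := by linarith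
  -- F P = (a + a*P)/(c + P) tends to a
  have hF : Tendsto (fun P : ℝ => (a + a * P) / (c + P)) atTop (nhds a) := by
    have h1 : Tendsto (fun P : ℝ => c + P) atTop atTop :=
      tendsto_atTop_add_const_left _ _ tendsto_id
    have h2 : Tendsto (fun P : ℝ => (c + P)⁻¹) atTop (nhds 0) :=
      h1.inv_tendsto_atTop
    have h3 : Tendsto (fun P : ℝ => a + (a - a * c) * (c + P)⁻¹) atTop
        (nhds (a + (a - a * c) * 0)) :=
      tendsto_const_nhds.add (h2.const_mul _)
    rw [mul_zero, add_zero] at h3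
    refine h3.congr' ?_
    filter_upwards [eventually_gt_atTop 0] with P hP
    have hne : c + P ≠ 0 := by positivity
    field_simp
    ring
  -- logb 2 ∘ F tends to logb 2 a
  have hlog : Tendsto (fun P : ℝ => Real.logb 2 ((a + a * P) / (c + P))) atTop
      (nhds (Real.logb 2 a)) := by
    have hcont : Tendsto Real.log (nhds a) (nhds (Real.log a)) :=
      (Real.continuousAt_log (ne_of_gt hapos)).tendsto
    have := (hcont.comp hF).div_const (Real.log 2)
    simpa [Real.logb, Function.comp] using this
  have hmain : Tendsto (fun P : ℝ => (1/2) * Real.logb 2 ((a + a * P) / (c + P)))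
      atTop (nhds ((1/2) * Real.logb 2 a)) := hlog.const_mul _
  refine hmain.congr' ?_
  filter_upwards [eventually_gt_atTop (a - 1), eventually_gt_atTop 0] with P hP hP0
  -- evaluate Rs a (a-1) P
  have hx : (0:ℝ) < a + a * P := by nlinarith
  have hy : (0:ℝ) < c + P := by linarith
  have hRs : Rs a (a - 1) P = g ((a - 1) + a * P) - g (a * (a - 1) + P) := by
    unfold Rs
    rw [if_neg (by linarith), if_pos (le_of_lt ha),
      if_neg (by push_neg; intro _; linarith),
      if_pos ⟨hP, by linarith⟩]
  rw [hRs]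
  unfold g
  have e1 : 1 + ((a - 1) + a * P) = a + a * P := by ring
  have e2 : 1 + (a * (a - 1) + P) = c + P := by rw [hc]; ring
  rw [e1, e2, Real.logb_div (ne_of_gt hx) (ne_of_gt hy)]
  ring

/-- Power-unconstrained secrecy rate, strong interference: the supremum of
the secrecy rate over powers bounded by `P̄` tends to `(1/2) log₂ a`. -/
theorem power_unconstrained_strong (a : ℝ) (ha : 1 < a) :
    Tendsto
      (fun Pbar : ℝ =>
        sSup {r : ℝ | ∃ P1 P2 : ℝ, 0 ≤ P1 ∧ P1 ≤ Pbar ∧ 0 ≤ P2 ∧ P2 ≤ Pbar ∧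
          r = Rs a P1 P2})
      atTop (nhds ((1/2) * Real.logb 2 a)) := by
  set L : ℝ := (1/2) * Real.logb 2 a with hL
  refine tendsto_of_tendsto_of_tendsto_of_le_of_le' (helper_tendsto a ha)
    tendsto_const_nhds ?_ ?_
  · -- lower bound eventually
    filter_upwards [eventually_gt_atTop (a - 1), eventually_gt_atTop 0] with P hP hP0
    have hbdd : BddAbove {r : ℝ | ∃ P1 P2 : ℝ, 0 ≤ P1 ∧ P1 ≤ P ∧ 0 ≤ P2 ∧ P2 ≤ P ∧
        r = Rs a P1 P2} := by
      refine ⟨L, ?_⟩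
      rintro r ⟨P1, P2, h1, _, h3, _, rfl⟩
      exact Rs_le a P1 P2 ha h1 h3
    exact le_csSup hbdd ⟨a - 1, P, by linarith, hP.le, hP0.le, le_rfl, rfl⟩
  · -- upper bound eventually
    filter_upwards [eventually_ge_atTop (0:ℝ)] with P hP0
    refine csSup_le ⟨Rs a 0 0, 0, 0, le_rfl, hP0, le_rfl, hP0, rfl⟩ ?_
    rintro r ⟨P1, P2, h1, _, h3, _, rfl⟩
    exact Rs_le a P1 P2 ha h1 h3
end

section
/- (Power-unconstrained secrecy rate, weak interference, explicit power control.) Let 0 < a < 1 be a real number, and for P1 > 0 set P2*(P1) := (√(1 + (1+a)·P1) − 1)/(1+a). Then the function P1 ↦ g(P1/(1 + a·P2*(P1))) − g(a·P1/(1 + P2*(P1))) tends, as P1 → ∞, to log₂(1/a); in particular the helping interferer doubles the power-unconstrained secrecy rate (1/2)·log₂(1/a) of the Gaussian wiretap channel without interferer. -/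
open Filter

/-- Power-unconstrained secrecy rate, weak interference, with the optimal
interferer power `P2*(P1) = (√(1+(1+a)P1)-1)/(1+a)`: the rate tends to
`log₂ (1/a)` as `P1 → ∞`. -/
theorem power_unconstrained_weak_explicit (a : ℝ) (ha0 : 0 < a) (ha1 : a < 1) :
    Tendsto
      (fun P1 : ℝ =>
        g (P1 / (1 + a * ((Real.sqrt (1 + (1 + a) * P1) - 1) / (1 + a)))) -
        g (a * P1 / (1 + (Real.sqrt (1 + (1 + a) * P1) - 1) / (1 + a))))
      atTop (nhds (Real.logb 2 (1/a))) := by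
  have ha : (0:ℝ) < 1 + a := by linarith
  -- Step 1: the expression equals logb 2 ((a+s)/(1+a*s)) with s = sqrt(1+(1+a)P1)
  have heq : ∀ᶠ P1 : ℝ in atTop,
      Real.logb 2 ((a + Real.sqrt (1 + (1 + a) * P1)) /
          (1 + a * Real.sqrt (1 + (1 + a) * P1)))
      = g (P1 / (1 + a * ((Real.sqrt (1 + (1 + a) * P1) - 1) / (1 + a)))) -
        g (a * P1 / (1 + (Real.sqrt (1 + (1 + a) * P1) - 1) / (1 + a))) := by
    filter_upwards [eventually_gt_atTop 0] with P1 hP1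
    set s := Real.sqrt (1 + (1 + a) * P1) with hsdef
    have hsq : s ^ 2 = 1 + (1 + a) * P1 := Real.sq_sqrt (by nlinarith)
    have hs1 : 1 ≤ s := by
      have h := Real.sqrt_le_sqrt (show (1:ℝ) ≤ 1 + (1 + a) * P1 by nlinarith)
      simpa [hsdef] using h
    have hs0 : 0 < s := by linarith
    have hden1 : 0 < 1 + a * s := by nlinarith
    have hden2 : 0 < a + s := by linarith
    have hA : 1 + P1 / (1 + a * ((s - 1) / (1 + a))) = s * (a + s) / (1 + a * s) := by
      have h1 : 1 + a * ((s - 1) / (1 + a)) = (1 + a * s) / (1 + a) := by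
        field_simp; ring
      rw [h1]
      field_simp
      nlinarith [hsq]
    have hB : 1 + a * P1 / (1 + (s - 1) / (1 + a)) = s * (1 + a * s) / (a + s) := by
      have h2 : 1 + (s - 1) / (1 + a) = (a + s) / (1 + a) := by
        field_simp; ring
      rw [h2]
      field_simp
      nlinarith [hsq]
    have l1 : Real.logb 2 (s * (a + s) / (1 + a * s))
        = Real.logb 2 s + Real.logb 2 (a + s) - Real.logb 2 (1 + a * s) := by
      rw [Real.logb_div (by positivity) (by positivity),
        Real.logb_mul (by positivity) (by positivity)]
    have l2 : Real.logb 2 (s * (1 + a * s) / (a + s))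
        = Real.logb 2 s + Real.logb 2 (1 + a * s) - Real.logb 2 (a + s) := by
      rw [Real.logb_div (by positivity) (by positivity),
        Real.logb_mul (by positivity) (by positivity)]
    have l3 : Real.logb 2 ((a + s) / (1 + a * s))
        = Real.logb 2 (a + s) - Real.logb 2 (1 + a * s) :=
      Real.logb_div (by positivity) (by positivity)
    simp only [g]
    rw [hA, hB, l1, l2, l3]
    ring
  -- Step 2: the limit
  have sqrtT : Tendsto Real.sqrt atTop atTop := by
    rw [tendsto_atTop_atTop]
    intro b
    refine ⟨max 0 (b ^ 2), fun x hx => ?_⟩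
    rcases le_or_gt b 0 with hb | hb
    · exact hb.trans (Real.sqrt_nonneg x)
    · rw [← Real.sqrt_sq hb.le]
      exact Real.sqrt_le_sqrt (le_trans (le_max_right _ _) hx)
  have Ts : Tendsto (fun P1 : ℝ => Real.sqrt (1 + (1 + a) * P1)) atTop atTop :=
    sqrtT.comp (tendsto_atTop_add_const_left _ 1 (Tendsto.const_mul_atTop ha tendsto_id))
  have Tf : Tendsto (fun x : ℝ => (a + x) / (1 + a * x)) atTop (nhds (1/a)) := by
    have h1 : Tendsto (fun x : ℝ => a / x + 1) atTop (nhds 1) := by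
      simpa using (tendsto_const_nhds.div_atTop tendsto_id).add
        (tendsto_const_nhds : Tendsto (fun _ : ℝ => (1:ℝ)) atTop _)
    have h2 : Tendsto (fun x : ℝ => 1 / x + a) atTop (nhds a) := by
      have h0 : Tendsto (fun x : ℝ => (1:ℝ) / x) atTop (nhds 0) :=
        tendsto_const_nhds.div_atTop tendsto_id
      simpa using h0.add (tendsto_const_nhds : Tendsto (fun _ : ℝ => a) atTop _)
    have h := h1.div h2 (ne_of_gt ha0)
    refine h.congr' ?_
    filter_upwards [eventually_gt_atTop 0] with x hx
    have hd : 0 < 1 + a * x := by nlinarith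
    rw [Pi.div_apply]
    field_simp
  have Tlog : ContinuousAt (Real.logb 2) (1/a) :=
    Real.continuousAt_logb (by positivity)
  exact (Tendsto.congr' heq) (Tlog.tendsto.comp (Tf.comp Ts))
end

section
/- (Power-unconstrained secrecy rate, weak interference.) Let 0 < a < 1 be a real number. For P̄ ≥ 0 define S(P̄) := sup { R_s(a, P1, P2) : 0 ≤ P1 ≤ P̄, 0 ≤ P2 ≤ P̄ }. Then S(P̄) tends to log₂(1/a) as P̄ → ∞. -/
open Filter

/-- Upper bound: for `0 < a < 1` the secrecy rate is at most `log₂ (1/a)`. -/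
lemma Rs_le_logb (a P1 P2 : ℝ) (ha0 : 0 < a) (ha1 : a < 1)
    (hP1 : 0 ≤ P1) (hP2 : 0 ≤ P2) :
    Rs a P1 P2 ≤ Real.logb 2 (1/a) := by
  have hL : 0 ≤ Real.logb 2 (1/a) :=
    Real.logb_nonneg one_lt_two (by rw [le_div_iff₀ ha0]; linarith)
  have hd1 : (0:ℝ) < 1 + a * P2 := by nlinarith
  have hd2 : (0:ℝ) < 1 + P2 := by linarith
  rw [Rs, if_neg (by linarith), if_neg (by linarith)]
  split_ifs with hlt
  · -- branch P2 < P1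
    set x := P1 / (1 + a * P2) with hx
    set y := a * P1 / (1 + P2) with hy
    have hx0 : 0 ≤ x := by positivity
    have hy0 : 0 ≤ y := by positivity
    have hle : 1 + x ≤ (1/a)^2 * (1 + y) := by
      have e1 : 1 + x = (1 + a * P2 + P1) / (1 + a * P2) := by
        rw [hx]; field_simp
      have e2 : (1/a)^2 * (1 + y) = (1 + P2 + a * P1) / (a^2 * (1 + P2)) := by
        rw [hy]; field_simp
      rw [e1, e2, div_le_div_iff₀ hd1 (by positivity)]
      have h1 : 0 ≤ (1 - a) * (1 + a) * (1 + P2) * (1 + a * P2) := by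
        apply mul_nonneg
        apply mul_nonneg
        apply mul_nonneg <;> linarith
        all_goals linarith
      have h2 : 0 ≤ a * P1 * (1 - a) := by
        apply mul_nonneg (mul_nonneg ha0.le hP1); linarith
      nlinarith [h1, h2]
    have m1 : Real.logb 2 (1 + x) ≤ Real.logb 2 ((1/a)^2 * (1 + y)) :=
      Real.logb_le_logb_of_le one_lt_two (by linarith) hle
    have m2 : Real.logb 2 ((1/a)^2 * (1 + y)) =
        2 * Real.logb 2 (1/a) + Real.logb 2 (1 + y) := by
      rw [Real.logb_mul (by positivity) (by positivity), Real.logb_pow]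
      push_cast; ring
    rw [g, g]
    linarith [m1, m2]
  · -- branch P1 ≤ P2
    have hle : 1 + P1 ≤ (1/a) * (1 + a * P1) := by
      have : (1:ℝ) ≤ 1/a := by rw [le_div_iff₀ ha0]; linarith
      have h2 : (1/a) * (1 + a * P1) = 1/a + (1/a * a) * P1 := by ring
      rw [h2, div_mul_cancel₀ _ (ne_of_gt ha0)]
      linarith
    have m1 : Real.logb 2 (1 + P1) ≤ Real.logb 2 ((1/a) * (1 + a * P1)) :=
      Real.logb_le_logb_of_le one_lt_two (by linarith) hle
    have m2 : Real.logb 2 ((1/a) * (1 + a * P1)) =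
        Real.logb 2 (1/a) + Real.logb 2 (1 + a * P1) := by
      rw [Real.logb_mul (by positivity) (by positivity)]
    rw [g, g]
    linarith [m1, m2]

/-- `Real.sqrt` tends to infinity. -/
lemma tendsto_sqrt_atTop' : Tendsto Real.sqrt atTop atTop := by
  rw [tendsto_atTop]
  intro b
  filter_upwards [eventually_ge_atTop ((max b 0)^2)] with x hx
  calc b ≤ max b 0 := le_max_left _ _
    _ = Real.sqrt ((max b 0)^2) := (Real.sqrt_sq (le_max_right _ _)).symm
    _ ≤ Real.sqrt x := Real.sqrt_le_sqrt hx

/-- The lower-bound family tends to `log₂ (1/a)`. -/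
lemma lower_tendsto (a : ℝ) (ha0 : 0 < a) (ha1 : a < 1) :
    Tendsto (fun P : ℝ => Rs a P (Real.sqrt P)) atTop
      (nhds (Real.logb 2 (1/a))) := by
  have ha2 : (0:ℝ) < a^2 := by positivity
  -- the rational function in `u = t⁻¹`
  set G : ℝ → ℝ := fun u =>
    (1 + (1+a)*u + (1+a)*u^2 + u^3) / (a^2 + 2*a*u + (1+a)*u^2 + u^3) with hGdef
  have hG0 : G 0 = 1/a^2 := by simp [hGdef]
  have hGc : ContinuousAt G 0 := by
    apply ContinuousAt.div
    · fun_prop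
    · fun_prop
    · simpa using ne_of_gt ha2
  have hinv : Tendsto (fun P : ℝ => (Real.sqrt P)⁻¹) atTop (nhds 0) :=
    tendsto_inv_atTop_zero.comp tendsto_sqrt_atTop'
  have hQ : Tendsto (fun P : ℝ => G ((Real.sqrt P)⁻¹)) atTop (nhds (1/a^2)) := by
    rw [← hG0]
    exact hGc.tendsto.comp hinv
  have hlog : Tendsto (fun P : ℝ => (1/2) * Real.logb 2 (G ((Real.sqrt P)⁻¹)))
      atTop (nhds ((1/2) * Real.logb 2 (1/a^2))) := by
    exact (((Real.continuousAt_logb (x := 1/a^2) (by positivity)).tendsto.comp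
      hQ).const_mul _)
  have hval : (1/2) * Real.logb 2 (1/a^2) = Real.logb 2 (1/a) := by
    have : (1:ℝ)/a^2 = (1/a)^2 := by field_simp
    rw [this, Real.logb_pow]
    push_cast; ring
  rw [hval] at hlog
  refine hlog.congr' ?_
  filter_upwards [eventually_ge_atTop (2:ℝ)] with P hP
  have hP1 : (1:ℝ) < P := by linarith
  have hP0 : (0:ℝ) ≤ P := by linarith
  set t := Real.sqrt P with htdef
  have ht0 : 0 ≤ t := Real.sqrt_nonneg P
  have ht1 : 1 < t := by
    rw [htdef, show (1:ℝ) = Real.sqrt 1 by simp]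
    exact Real.sqrt_lt_sqrt (by norm_num) hP1
  have htP : t^2 = P := Real.sq_sqrt hP0
  have htlt : t < P := by nlinarith
  have htpos : (0:ℝ) < t := by linarith
  have htne : t ≠ 0 := ne_of_gt htpos
  have hd1 : (0:ℝ) < 1 + a * t := by nlinarith
  have hd2 : (0:ℝ) < 1 + t := by linarith
  -- Rs takes the weak-interference, P2 < P1 branch
  have hRs : Rs a P t = g (P / (1 + a * t)) - g (a * P / (1 + t)) := by
    rw [Rs, if_neg (by linarith), if_neg (by linarith), if_pos htlt]
  rw [hRs]
  have hx0 : (0:ℝ) < 1 + P / (1 + a * t) := by positivity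
  have hy0 : (0:ℝ) < 1 + a * P / (1 + t) := by positivity
  have hDen : (0:ℝ) < a^2 + 2*a*t⁻¹ + (1+a)*t⁻¹^2 + t⁻¹^3 := by positivity
  have hratio : (1 + P / (1 + a * t)) / (1 + a * P / (1 + t)) = G t⁻¹ := by
    simp only [hGdef]
    rw [← htP]
    field_simp
    ring
  rw [g, g, ← mul_sub, ← Real.logb_div (ne_of_gt hx0) (ne_of_gt hy0), hratio]

/-- Power-unconstrained secrecy rate, weak interference: the supremum of
the secrecy rate over powers bounded by `P̄` tends to `log₂ (1/a)`. -/
theorem power_unconstrained_weak (a : ℝ) (ha0 : 0 < a) (ha1 : a < 1) :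
    Tendsto
      (fun Pbar : ℝ =>
        sSup {r : ℝ | ∃ P1 P2 : ℝ, 0 ≤ P1 ∧ P1 ≤ Pbar ∧ 0 ≤ P2 ∧ P2 ≤ Pbar ∧
          r = Rs a P1 P2})
      atTop (nhds (Real.logb 2 (1/a))) := by
  set L := Real.logb 2 (1/a) with hL
  have hub : ∀ Pbar : ℝ, ∀ r ∈ {r : ℝ | ∃ P1 P2 : ℝ, 0 ≤ P1 ∧ P1 ≤ Pbar ∧
      0 ≤ P2 ∧ P2 ≤ Pbar ∧ r = Rs a P1 P2}, r ≤ L := by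
    rintro Pbar r ⟨P1, P2, h1, _, h3, _, rfl⟩
    exact Rs_le_logb a P1 P2 ha0 ha1 h1 h3
  have hmem : ∀ Pbar : ℝ, 2 ≤ Pbar →
      Rs a Pbar (Real.sqrt Pbar) ∈ {r : ℝ | ∃ P1 P2 : ℝ, 0 ≤ P1 ∧ P1 ≤ Pbar ∧
        0 ≤ P2 ∧ P2 ≤ Pbar ∧ r = Rs a P1 P2} := by
    intro Pbar hPb
    have h0 : (0:ℝ) ≤ Pbar := by linarith
    have hsle : Real.sqrt Pbar ≤ Pbar := by
      have := Real.sq_sqrt h0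
      nlinarith [Real.sqrt_nonneg Pbar,
        Real.sqrt_le_sqrt (show (1:ℝ) ≤ Pbar by linarith),
        Real.sqrt_one]
    exact ⟨Pbar, Real.sqrt Pbar, h0, le_refl _, Real.sqrt_nonneg _, hsle, rfl⟩
  refine tendsto_of_tendsto_of_tendsto_of_le_of_le'
    (lower_tendsto a ha0 ha1) (tendsto_const_nhds (x := L)) ?_ ?_
  · filter_upwards [eventually_ge_atTop (2:ℝ)] with Pbar hPb
    exact le_csSup ⟨L, hub Pbar⟩ (hmem Pbar hPb)
  · filter_upwards [eventually_ge_atTop (2:ℝ)] with Pbar hPb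
    exact csSup_le ⟨_, hmem Pbar hPb⟩ (hub Pbar)
end
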